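/- For n ≥ 1, a topological space X d-validates the scheme C_n if and only if it d-validates C_n*, if and only if it C-validates C_n, if and only if X is hereditarily (n+1)-irresolvable. -/

import Mathlib

/-- Modal formulas: variables, ⊤, ¬, ∧, □. -/
inductive Fml : Type
  | var : ℕ → Fml
  | top : Fml
  | neg : Fml → Fml
  | and : Fml → Fml → Fml
  | box : Fml → Fml
deriving DecidableEq

namespace Fml
/-- Material implication, defined from ¬ and ∧. -/
def imp (φ ψ : Fml) : Fml := .neg (.and φ (.neg ψ))
/-- Disjunction. -/
def or (φ ψ : Fml) : Fml := .neg (.and (.neg φ) (.neg ψ))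
/-- ◇φ := ¬□¬φ. -/
def dia (φ : Fml) : Fml := .neg (.box (.neg φ))
/-- □*φ := φ ∧ □φ. -/
def boxs (φ : Fml) : Fml := .and φ (.box φ)
/-- ◇*φ := φ ∨ ◇φ. -/
def dias (φ : Fml) : Fml := Fml.or φ (dia φ)
end Fml

/-- Kripke satisfaction. -/
def sat {W : Type} (R : W → W → Prop) (V : ℕ → Set W) : W → Fml → Prop
  | x, .var p => x ∈ V p
  | _, .top => True
  | x, .neg φ => ¬ sat R V x φ
  | x, .and φ ψ => sat R V x φ ∧ sat R V x ψ
  | x, .box φ => ∀ y, R x y → sat R V y φ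

/-- P_n(φ0; φ1,...,φn): P_0(φ0) = ◇φ0, P_n(φ0,φ1,...,φn) = ◇(φ1 ∧ P_{n-1}(φ0,φ2,...,φn)). -/
def Pfml (φ0 : Fml) : List Fml → Fml
  | [] => φ0.dia
  | ψ :: rest => (Fml.and ψ (Pfml φ0 rest)).dia

/-- Conjunction of ¬(φ ∧ ψ) for ψ in the list. -/
def conjNeg (φ : Fml) : List Fml → Fml
  | [] => .top
  | ψ :: rest => .and (.neg (.and φ ψ)) (conjNeg φ rest)

/-- D_n: pairwise disjointness conjunction ⋀_{i<j} ¬(φ_i ∧ φ_j). -/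
def Dfml : List Fml → Fml
  | [] => .top
  | φ :: rest => .and (conjNeg φ rest) (Dfml rest)

/-- The scheme C_n instance on φ0,φ1,...,φn (φs = [φ1,...,φn]). -/
def Cfml (φ0 : Fml) (φs : List Fml) : Fml :=
  ((Dfml (φ0 :: φs)).boxs).imp ((φ0.dia).imp ((Fml.and φ0 (Fml.neg (Pfml φ0 φs))).dia))

/-- The scheme C_n* instance: as C_n but with ◇* in the consequent. -/
def CfmlStar (φ0 : Fml) (φs : List Fml) : Fml :=
  ((Dfml (φ0 :: φs)).boxs).imp ((φ0.dia).imp ((Fml.and φ0 (Fml.neg (Pfml φ0 φs))).dias))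

/-- An ascending R-chain. -/
def AscChain {W : Type} (R : W → W → Prop) (x : ℕ → W) : Prop := ∀ m, R (x m) (x (m+1))

/-- A strictly ascending R-chain. -/
def StrictAscChain {W : Type} (R : W → W → Prop) (x : ℕ → W) : Prop :=
  AscChain R x ∧ ∀ m, ¬ R (x (m+1)) (x m)

/-- The R-cluster of x. -/
def cluster {W : Type} (R : W → W → Prop) (x : W) : Set W := {y | x = y ∨ (R x y ∧ R y x)}

/-- The frame has a cycle of length k (k ≥ 1): k distinct points x_0 R x_1 R ... R x_{k-1} R x_0. -/
def HasCycle {W : Type} (R : W → W → Prop) (k : ℕ) : Prop :=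
  1 ≤ k ∧ ∃ x : ℕ → W, (∀ i j, i < k → j < k → x i = x j → i = j) ∧
    ∀ i < k, R (x i) (x ((i+1) % k))

/-- Circumference at most n: every cycle has length ≤ n. -/
def CircumLE {W : Type} (R : W → W → Prop) (n : ℕ) : Prop := ∀ k, HasCycle R k → k ≤ n

/-- The frame (W,R) validates the scheme C_n. -/
def ValidatesCn {W : Type} (R : W → W → Prop) (n : ℕ) : Prop :=
  ∀ (V : ℕ → Set W) (x : W) (φ0 : Fml) (φs : List Fml), φs.length = n →
    sat R V x (Cfml φ0 φs)

/-- A Boolean valuation on formulas (box-formulas and variables as atoms). -/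
def BoolEval (w : Fml → Bool) : Prop :=
  w .top = true ∧ (∀ φ, w (.neg φ) = !w φ) ∧ (∀ φ ψ, w (.and φ ψ) = (w φ && w ψ))

/-- Propositional tautologies. -/
def Tautology (φ : Fml) : Prop := ∀ w, BoolEval w → w φ = true

/-- Theorems of the smallest normal modal logic containing the axiom set Ax. -/
inductive Prov (Ax : Set Fml) : Fml → Prop
  | taut {φ} : Tautology φ → Prov Ax φ
  | kax (φ ψ) : Prov Ax ((Fml.box (φ.imp ψ)).imp ((Fml.box φ).imp (Fml.box ψ)))
  | ax {φ} : φ ∈ Ax → Prov Ax φ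
  | mp {φ ψ} : Prov Ax (φ.imp ψ) → Prov Ax φ → Prov Ax ψ
  | nec {φ} : Prov Ax φ → Prov Ax (.box φ)

/-- All instances of the transitivity scheme 4. -/
def Ax4 : Set Fml := {χ | ∃ φ, χ = (Fml.box φ).imp (Fml.box (Fml.box φ))}

/-- Axioms of K4C_n: scheme 4 together with all instances of scheme C_n. -/
def AxK4C (n : ℕ) : Set Fml :=
  Ax4 ∪ {χ | ∃ (φ0 : Fml) (φs : List Fml), φs.length = n ∧ χ = Cfml φ0 φs}

/-- X is hereditarily m-irresolvable: no nonempty subspace has m pairwise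
disjoint subsets each dense in the subspace. -/
def HeredIrres (X : Type) [TopologicalSpace X] (m : ℕ) : Prop :=
  ∀ S : Set X, S.Nonempty →
    ¬ ∃ D : Fin m → Set X, (∀ i, D i ⊆ S) ∧ (∀ i j, i ≠ j → Disjoint (D i) (D j)) ∧
      ∀ i, S ⊆ closure (D i)

/-- C-semantics truth sets: □ is interior (hence ◇ is closure). -/
def csat {X : Type} [TopologicalSpace X] (V : ℕ → Set X) : Fml → Set X
  | .var p => V p
  | .top => Set.univ
  | .neg φ => (csat V φ)ᶜ
  | .and φ ψ => csat V φ ∩ csat V ψ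
  | .box φ => interior (csat V φ)

/-- The derived set: set of limit points of Y. -/
def dset {X : Type} [TopologicalSpace X] (Y : Set X) : Set X := {x | x ∈ closure (Y \ {x})}

/-- d-semantics truth sets: ◇ is the derived-set operator. -/
def dsat {X : Type} [TopologicalSpace X] (V : ℕ → Set X) : Fml → Set X
  | .var p => V p
  | .top => Set.univ
  | .neg φ => (dsat V φ)ᶜ
  | .and φ ψ => dsat V φ ∩ dsat V ψ
  | .box φ => (dset ((dsat V φ)ᶜ))ᶜ

/-- The Alexandroff topology of a frame: open sets are the R-up-sets. -/
def alexTop {W : Type} (R : W → W → Prop) : TopologicalSpace W where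
  IsOpen O := ∀ x ∈ O, ∀ y, R x y → y ∈ O
  isOpen_univ := by intro x _ y _; trivial
  isOpen_inter := by intro s t hs ht x hx y hR; exact ⟨hs x hx.1 y hR, ht x hx.2 y hR⟩
  isOpen_sUnion := by
    intro S hS x hx y hR
    obtain ⟨t, htS, hxt⟩ := hx
    exact ⟨t, htS, hS t htS x hxt y hR⟩


section Aux
variable {X : Type} [TopologicalSpace X]

/-- Set-level analogue of `conjNeg`. -/
def cnS (A : Set X) : List (Set X) → Set X
  | [] => Set.univ
  | B :: r => (A ∩ B)ᶜ ∩ cnS A r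

/-- Set-level analogue of `Dfml`. -/
def DS : List (Set X) → Set X
  | [] => Set.univ
  | A :: r => cnS A r ∩ DS r

/-- Set-level analogue of `Pfml` under C-semantics. -/
def PCs (A0 : Set X) : List (Set X) → Set X
  | [] => closure A0
  | B :: r => closure (B ∩ PCs A0 r)

/-- Set-level analogue of `Pfml` under d-semantics. -/
def PDs (A0 : Set X) : List (Set X) → Set X
  | [] => dset A0
  | B :: r => dset (B ∩ PDs A0 r)

lemma dset_subset_closure (Y : Set X) : dset Y ⊆ closure Y :=
  fun _ hx => closure_mono Set.diff_subset hx

lemma closure_eq_union_dset (Y : Set X) : closure Y = Y ∪ dset Y := by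
  apply Set.Subset.antisymm
  · intro x hx
    by_cases hxY : x ∈ Y
    · exact Or.inl hxY
    · refine Or.inr ?_
      have : Y \ {x} = Y := by
        rw [Set.diff_singleton_eq_self hxY]
      simpa [dset, this] using hx
  · exact Set.union_subset subset_closure (dset_subset_closure Y)

variable (V : ℕ → Set X)

lemma dsat_dia (φ : Fml) : dsat V φ.dia = dset (dsat V φ) := by
  show ((dset ((dsat V φ)ᶜᶜ))ᶜ)ᶜ = dset (dsat V φ)
  rw [compl_compl, compl_compl]

lemma dsat_boxs (φ : Fml) : dsat V φ.boxs = interior (dsat V φ) := by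
  show dsat V φ ∩ (dset ((dsat V φ)ᶜ))ᶜ = interior (dsat V φ)
  ext x
  simp only [Set.mem_inter_iff, Set.mem_compl_iff, dset, Set.mem_setOf_eq,
    ← closure_compl, Set.mem_compl_iff, interior, Set.mem_sUnion]
  constructor
  · rintro ⟨hxA, hx⟩
    have : (dsat V φ)ᶜ \ {x} = (dsat V φ)ᶜ := Set.diff_singleton_eq_self (by simpa using hxA)
    rw [this] at hx
    have : x ∈ interior (dsat V φ) := by
      rw [← compl_compl (interior (dsat V φ)), ← closure_compl]
      simpa using hx
    simpa [interior] using this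
  · intro h
    have hxint : x ∈ interior (dsat V φ) := by simpa [interior] using h
    refine ⟨interior_subset hxint, fun hc => ?_⟩
    have : x ∈ closure ((dsat V φ)ᶜ) := closure_mono Set.diff_subset hc
    rw [closure_compl] at this
    exact this hxint

lemma dsat_dias (φ : Fml) : dsat V φ.dias = closure (dsat V φ) := by
  show ((dsat V φ)ᶜ ∩ ((dsat V φ.dia)ᶜ))ᶜ = closure (dsat V φ)
  rw [dsat_dia, Set.compl_inter, compl_compl, compl_compl, ← closure_eq_union_dset]

lemma mem_dsat_imp (φ ψ : Fml) (x : X) :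
    x ∈ dsat V (φ.imp ψ) ↔ (x ∈ dsat V φ → x ∈ dsat V ψ) := by
  show x ∈ (dsat V φ ∩ (dsat V ψ)ᶜ)ᶜ ↔ _
  simp [imp_iff_not_or, or_comm]

lemma csat_dia (φ : Fml) : csat V φ.dia = closure (csat V φ) := by
  show (interior ((csat V φ)ᶜ))ᶜ = closure (csat V φ)
  rw [interior_compl, compl_compl]

lemma csat_boxs (φ : Fml) : csat V φ.boxs = interior (csat V φ) := by
  show csat V φ ∩ interior (csat V φ) = interior (csat V φ)
  exact Set.inter_eq_self_of_subset_right interior_subset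

lemma mem_csat_imp (φ ψ : Fml) (x : X) :
    x ∈ csat V (φ.imp ψ) ↔ (x ∈ csat V φ → x ∈ csat V ψ) := by
  show x ∈ (csat V φ ∩ (csat V ψ)ᶜ)ᶜ ↔ _
  simp [imp_iff_not_or, or_comm]

lemma dsat_conjNeg (φ : Fml) (l : List Fml) :
    dsat V (conjNeg φ l) = cnS (dsat V φ) (l.map (dsat V)) := by
  induction l with
  | nil => rfl
  | cons ψ r ih =>
      show (dsat V φ ∩ dsat V ψ)ᶜ ∩ dsat V (conjNeg φ r) = _
      rw [ih]; rfl

lemma dsat_Dfml (l : List Fml) : dsat V (Dfml l) = DS (l.map (dsat V)) := by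
  induction l with
  | nil => rfl
  | cons φ r ih =>
      show dsat V (conjNeg φ r) ∩ dsat V (Dfml r) = _
      rw [ih, dsat_conjNeg]; rfl

lemma dsat_Pfml (φ0 : Fml) (l : List Fml) :
    dsat V (Pfml φ0 l) = PDs (dsat V φ0) (l.map (dsat V)) := by
  induction l with
  | nil => exact dsat_dia V φ0
  | cons ψ r ih =>
      show dsat V ((Fml.and ψ (Pfml φ0 r)).dia) = _
      rw [dsat_dia]
      show dset (dsat V ψ ∩ dsat V (Pfml φ0 r)) = _
      rw [ih]; rfl

lemma csat_conjNeg (φ : Fml) (l : List Fml) :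
    csat V (conjNeg φ l) = cnS (csat V φ) (l.map (csat V)) := by
  induction l with
  | nil => rfl
  | cons ψ r ih =>
      show (csat V φ ∩ csat V ψ)ᶜ ∩ csat V (conjNeg φ r) = _
      rw [ih]; rfl

lemma csat_Dfml (l : List Fml) : csat V (Dfml l) = DS (l.map (csat V)) := by
  induction l with
  | nil => rfl
  | cons φ r ih =>
      show csat V (conjNeg φ r) ∩ csat V (Dfml r) = _
      rw [ih, csat_conjNeg]; rfl

lemma csat_Pfml (φ0 : Fml) (l : List Fml) :
    csat V (Pfml φ0 l) = PCs (csat V φ0) (l.map (csat V)) := by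
  induction l with
  | nil => exact csat_dia V φ0
  | cons ψ r ih =>
      show csat V ((Fml.and ψ (Pfml φ0 r)).dia) = _
      rw [csat_dia]
      show closure (csat V ψ ∩ csat V (Pfml φ0 r)) = _
      rw [ih]; rfl


lemma mem_cnS_iff (A : Set X) (l : List (Set X)) (x : X) :
    x ∈ cnS A l ↔ ∀ B ∈ l, ¬(x ∈ A ∧ x ∈ B) := by
  induction l with
  | nil => simp [cnS]
  | cons B r ih =>
      simp only [cnS, Set.mem_inter_iff, Set.mem_compl_iff, ih, List.mem_cons]
      constructor
      · rintro ⟨h1, h2⟩ B' (rfl | hB') hx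
        · exact h1 ⟨hx.1, hx.2⟩
        · exact h2 B' hB' hx
      · intro h
        exact ⟨fun hx => h B (Or.inl rfl) hx, fun B' hB' => h B' (Or.inr hB')⟩

lemma mem_DS_iff (l : List (Set X)) (x : X) :
    x ∈ DS l ↔ l.Pairwise (fun A B => ¬(x ∈ A ∧ x ∈ B)) := by
  induction l with
  | nil => simp [DS]
  | cons A r ih => simp [DS, ih, mem_cnS_iff, List.pairwise_cons]

lemma DS_univ {l : List (Set X)} (h : l.Pairwise Disjoint) : DS l = Set.univ := by
  apply Set.eq_univ_of_forall
  intro x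
  rw [mem_DS_iff]
  exact h.imp (fun hd ⟨h1, h2⟩ => Set.disjoint_left.mp hd h1 h2)

lemma isClosed_PCs (A0 : Set X) (l : List (Set X)) : IsClosed (PCs A0 l) := by
  cases l <;> exact isClosed_closure

lemma PCs_append (A0 : Set X) (l₁ l₂ : List (Set X)) :
    PCs A0 (l₁ ++ l₂) ⊆ PCs A0 l₂ := by
  induction l₁ with
  | nil => exact subset_rfl
  | cons B r ih =>
      show closure (B ∩ PCs A0 (r ++ l₂)) ⊆ _
      refine subset_trans ?_ ih
      have : B ∩ PCs A0 (r ++ l₂) ⊆ PCs A0 (r ++ l₂) := Set.inter_subset_right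
      calc closure (B ∩ PCs A0 (r ++ l₂)) ⊆ closure (PCs A0 (r ++ l₂)) := closure_mono this
        _ = PCs A0 (r ++ l₂) := (isClosed_PCs A0 _).closure_eq

lemma PCs_subset_closure (A0 : Set X) (l : List (Set X)) : PCs A0 l ⊆ closure A0 := by
  have := PCs_append A0 l []
  simpa [PCs] using this

lemma PDs_subset_PCs (A0 : Set X) (l : List (Set X)) : PDs A0 l ⊆ PCs A0 l := by
  induction l with
  | nil => exact dset_subset_closure A0
  | cons B r ih =>
      show dset (B ∩ PDs A0 r) ⊆ closure (B ∩ PCs A0 r)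
      refine subset_trans (dset_subset_closure _) (closure_mono ?_)
      exact Set.inter_subset_inter_right B ih

/-- The core density construction: if `W` is open and `W ∩ A0 ⊆ PCs A0 L`, then
every member of `A0 :: L` is dense in `S = W ∩ PCs A0 L`. -/
lemma core_dense (W A0 : Set X) (hW : IsOpen W) (L : List (Set X))
    (H : W ∩ A0 ⊆ PCs A0 L) :
    ∀ B ∈ A0 :: L, W ∩ PCs A0 L ⊆ closure (B ∩ (W ∩ PCs A0 L)) := by
  set S := W ∩ PCs A0 L with hS
  have wrap : W ∩ closure A0 ⊆ PCs A0 L := by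
    refine subset_trans (hW.inter_closure) ?_
    calc closure (W ∩ A0) ⊆ closure (PCs A0 L) := closure_mono H
      _ = PCs A0 L := (isClosed_PCs A0 L).closure_eq
  intro B hB
  rcases List.mem_cons.mp hB with rfl | hB
  · -- B = A0
    have h1 : S ⊆ closure (W ∩ B) := by
      intro y hy
      have : y ∈ W ∩ closure B := ⟨hy.1, PCs_subset_closure B L hy.2⟩
      exact hW.inter_closure this
    refine subset_trans h1 (closure_mono ?_)
    intro y hy
    exact ⟨hy.2, hy.1, H hy⟩
  · -- B ∈ L
    obtain ⟨l₁, l₂, rfl⟩ := List.append_of_mem hB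
    intro y hy
    have hy2 : y ∈ W ∩ PCs A0 (B :: l₂) := ⟨hy.1, PCs_append A0 l₁ (B :: l₂) hy.2⟩
    have : y ∈ closure (W ∩ (B ∩ PCs A0 l₂)) := hW.inter_closure ⟨hy2.1, hy2.2⟩
    refine closure_mono ?_ this
    rintro z ⟨hzW, hzB, hzP⟩
    have hz2 : z ∈ PCs A0 (B :: l₂) := subset_closure ⟨hzB, hzP⟩
    have hzcl : z ∈ closure A0 := PCs_subset_closure A0 (B :: l₂) hz2
    exact ⟨hzB, hzW, wrap ⟨hzW, hzcl⟩⟩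

/-- If all members of `L` are dense subsets of `S` and `S ⊆ closure A0`, then
`S ⊆ PCs A0 L`. -/
lemma subset_PCs (S A0 : Set X) (hA0 : S ⊆ closure A0) :
    ∀ L : List (Set X), (∀ B ∈ L, B ⊆ S ∧ S ⊆ closure B) → S ⊆ PCs A0 L := by
  intro L
  induction L with
  | nil => intro _; exact hA0
  | cons B r ih =>
      intro h
      obtain ⟨hBS, hSB⟩ := h B (List.mem_cons_self)
      have hr : S ⊆ PCs A0 r := ih (fun B' hB' => h B' (List.mem_cons_of_mem B hB'))
      show S ⊆ closure (B ∩ PCs A0 r)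
      refine subset_trans hSB (closure_mono ?_)
      exact fun z hz => ⟨hz, hr (hBS hz)⟩

/-- Successive disjointness hypothesis for the `PDs` chain lemma. -/
def CH (A0 : Set X) : Set X → List (Set X) → Prop
  | C, [] => Disjoint C A0
  | C, B :: r => Disjoint C B ∧ CH A0 B r

lemma subset_PDs (S A0 : Set X) (hA0 : S ⊆ closure A0) :
    ∀ (L : List (Set X)) (C : Set X), C ⊆ S →
      (∀ B ∈ L, B ⊆ S ∧ S ⊆ closure B) → CH A0 C L → C ⊆ PDs A0 L := by
  intro L
  induction L with
  | nil =>
      intro C hCS _ hch y hy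
      have hyA0 : y ∉ A0 := Set.disjoint_left.mp hch hy
      show y ∈ closure (A0 \ {y})
      rw [Set.diff_singleton_eq_self hyA0]
      exact hA0 (hCS hy)
  | cons B r ih =>
      intro C hCS h hch
      obtain ⟨hdCB, hch'⟩ := hch
      obtain ⟨hBS, hSB⟩ := h B (List.mem_cons_self)
      have hBP : B ⊆ PDs A0 r :=
        ih B hBS (fun B' hB' => h B' (List.mem_cons_of_mem B hB')) hch'
      intro y hy
      have hyB : y ∉ B := Set.disjoint_left.mp hdCB hy
      show y ∈ closure ((B ∩ PDs A0 r) \ {y})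
      refine closure_mono ?_ (hSB (hCS hy))
      intro z hz
      exact ⟨⟨hz, hBP hz⟩, by rintro rfl; exact hyB hz⟩


/-- Main contradiction: an open `W` meeting `A0`, on which `A0 :: L` are pairwise
disjoint and `W ∩ A0 ⊆ PCs A0 L`, contradicts hereditary m-irresolvability. -/
lemma no_construct {m : ℕ} (hHI : HeredIrres X m) (W A0 : Set X) (hW : IsOpen W)
    (L : List (Set X)) (hm : (A0 :: L).length = m)
    (hdisj : ∀ y ∈ W, (A0 :: L).Pairwise (fun P Q => ¬(y ∈ P ∧ y ∈ Q)))
    (H : W ∩ A0 ⊆ PCs A0 L) (hne : (W ∩ A0).Nonempty) : False := by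
  set S := W ∩ PCs A0 L with hSdef
  have hsubS : W ∩ A0 ⊆ S := fun y hy => ⟨hy.1, H hy⟩
  obtain ⟨y0, hy0⟩ := hne
  refine hHI S ⟨y0, hsubS hy0⟩
    ⟨fun i => (A0 :: L).get ⟨i.1, by rw [hm]; exact i.2⟩ ∩ S, ?_, ?_, ?_⟩
  · intro i; exact Set.inter_subset_right
  · intro i j hij
    rw [Set.disjoint_left]
    rintro z ⟨hzi, hzS⟩ ⟨hzj, -⟩
    have hp := hdisj z hzS.1
    rw [List.pairwise_iff_get] at hp
    rcases lt_or_gt_of_ne (fun h => hij (Fin.ext h) : (i : ℕ) ≠ (j : ℕ)) with h | h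
    · exact hp ⟨i.1, by rw [hm]; exact i.2⟩ ⟨j.1, by rw [hm]; exact j.2⟩ h ⟨hzi, hzj⟩
    · exact hp ⟨j.1, by rw [hm]; exact j.2⟩ ⟨i.1, by rw [hm]; exact i.2⟩ h ⟨hzj, hzi⟩
  · intro i
    exact core_dense W A0 hW L H _ (List.get_mem _ _)

lemma HI_imp_Cvalid {n : ℕ} (hHI : HeredIrres X (n+1)) (V : ℕ → Set X) (φ0 : Fml)
    (φs : List Fml) (hlen : φs.length = n) : csat V (Cfml φ0 φs) = Set.univ := by
  apply Set.eq_univ_of_forall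
  intro x
  show x ∈ csat V (Fml.imp _ _)
  rw [mem_csat_imp]
  intro h1
  rw [mem_csat_imp]
  intro h2
  set A0 := csat V φ0 with hA0
  set L := φs.map (csat V) with hL
  have h1' : x ∈ interior (DS (A0 :: L)) := by
    rw [← List.map_cons, ← csat_Dfml, ← csat_boxs]; exact h1
  have h2' : x ∈ closure A0 := by rw [← csat_dia]; exact h2
  rw [csat_dia]
  have hand : csat V (Fml.and φ0 (Fml.neg (Pfml φ0 φs))) = A0 ∩ (PCs A0 L)ᶜ := by
    show A0 ∩ (csat V (Pfml φ0 φs))ᶜ = _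
    rw [csat_Pfml]
  rw [hand]
  by_contra hx
  set W := interior (DS (A0 :: L)) ∩ (closure (A0 ∩ (PCs A0 L)ᶜ))ᶜ with hW
  have hWopen : IsOpen W := isOpen_interior.inter isClosed_closure.isOpen_compl
  have hxW : x ∈ W := ⟨h1', hx⟩
  have H : W ∩ A0 ⊆ PCs A0 L := by
    rintro y ⟨⟨-, hy2⟩, hyA0⟩
    by_contra hyP
    exact hy2 (subset_closure ⟨hyA0, hyP⟩)
  have hne : (W ∩ A0).Nonempty := mem_closure_iff.mp h2' W hWopen hxW
  refine no_construct hHI W A0 hWopen L (by simp [hL, hlen]) ?_ H hne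
  intro y hy
  have : y ∈ DS (A0 :: L) := interior_subset hy.1
  rwa [mem_DS_iff] at this

lemma HI_imp_dvalid {n : ℕ} (hn : 1 ≤ n) (hHI : HeredIrres X (n+1)) (V : ℕ → Set X)
    (φ0 : Fml) (φs : List Fml) (hlen : φs.length = n) :
    dsat V (Cfml φ0 φs) = Set.univ := by
  apply Set.eq_univ_of_forall
  intro x
  show x ∈ dsat V (Fml.imp _ _)
  rw [mem_dsat_imp]
  intro h1
  rw [mem_dsat_imp]
  intro h2
  set A0 := dsat V φ0 with hA0
  set L := φs.map (dsat V) with hL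
  set P := PDs A0 L with hP
  have h1' : x ∈ interior (DS (A0 :: L)) := by
    rw [← List.map_cons, ← dsat_Dfml, ← dsat_boxs]; exact h1
  have h2' : x ∈ closure (A0 \ {x}) := by
    have h2'' := h2
    rw [dsat_dia] at h2''
    exact h2''
  rw [dsat_dia]
  have hand : dsat V (Fml.and φ0 (Fml.neg (Pfml φ0 φs))) = A0 ∩ Pᶜ := by
    show A0 ∩ (dsat V (Pfml φ0 φs))ᶜ = _
    rw [dsat_Pfml]
  rw [hand]
  by_contra hx
  -- `O` is an open set around `x` missing `(A0 ∩ Pᶜ) \ {x}`.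
  set O := (closure ((A0 ∩ Pᶜ) \ {x}))ᶜ with hO
  have hOopen : IsOpen O := isClosed_closure.isOpen_compl
  have hxO : x ∈ O := hx
  have hOempty : O ∩ ((A0 ∩ Pᶜ) \ {x}) = ∅ := by
    apply Set.eq_empty_of_forall_notMem
    rintro z ⟨hz1, hz2⟩
    exact hz1 (subset_closure hz2)
  by_cases hcase : x ∈ A0 ∧ x ∉ P
  · -- Then x itself belongs to the first member of L, contradicting disjointness.
    obtain ⟨ψ, rest, rfl⟩ : ∃ ψ rest, φs = ψ :: rest := by
      cases φs with
      | nil => simp at hlen; omega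
      | cons ψ rest => exact ⟨ψ, rest, rfl⟩
    set B := dsat V ψ with hB
    set r := rest.map (dsat V) with hr
    have hLBr : L = B :: r := rfl
    have hPB : P = dset (B ∩ PDs A0 r) := by rw [hP, hLBr]; rfl
    have hxP : x ∉ closure ((B ∩ PDs A0 r) \ {x}) := by
      rw [hPB] at hcase; exact hcase.2
    set O₂ := (closure ((B ∩ PDs A0 r) \ {x}))ᶜ with hO₂
    set W₃ := O ∩ O₂ ∩ interior (DS (A0 :: L)) with hW₃
    have hW₃open : IsOpen W₃ :=
      (hOopen.inter isClosed_closure.isOpen_compl).inter isOpen_interior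
    have hxW₃ : x ∈ W₃ := ⟨⟨hxO, hxP⟩, h1'⟩
    obtain ⟨y, hyW₃, hyA0, hyx⟩ := mem_closure_iff.mp h2' W₃ hW₃open hxW₃
    have hyP : y ∈ P := by
      by_contra hyP
      have : y ∈ O ∩ ((A0 ∩ Pᶜ) \ {x}) := ⟨hyW₃.1.1, ⟨hyA0, hyP⟩, hyx⟩
      rw [hOempty] at this
      exact this
    rw [hPB] at hyP
    obtain ⟨z, hzW₃, hz2, hzy⟩ := mem_closure_iff.mp hyP W₃ hW₃open hyW₃
    have hzx : z = x := by
      by_contra hzx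
      exact hzW₃.1.2 (subset_closure ⟨hz2, hzx⟩)
    subst hzx
    -- so x ∈ B, but also x ∈ A0, contradicting pairwise disjointness at x
    have hxDS : z ∈ DS (A0 :: L) := interior_subset hzW₃.2
    rw [mem_DS_iff, List.pairwise_cons] at hxDS
    exact hxDS.1 B (by rw [hLBr]; exact List.mem_cons_self) ⟨hcase.1, hz2.1⟩
  · -- main case: apply the density construction
    set W₁ := O ∩ interior (DS (A0 :: L)) with hW₁
    have hW₁open : IsOpen W₁ := hOopen.inter isOpen_interior
    have hxW₁ : x ∈ W₁ := ⟨hxO, h1'⟩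
    have H : W₁ ∩ A0 ⊆ P := by
      rintro y ⟨⟨hyO, -⟩, hyA0⟩
      by_cases hyx : y = x
      · subst hyx
        by_contra hyP
        exact hcase ⟨hyA0, hyP⟩
      · by_contra hyP
        have : y ∈ O ∩ ((A0 ∩ Pᶜ) \ {x}) := ⟨hyO, ⟨hyA0, hyP⟩, hyx⟩
        rw [hOempty] at this
        exact this
    have H' : W₁ ∩ A0 ⊆ PCs A0 L := subset_trans H (PDs_subset_PCs A0 L)
    have hne : (W₁ ∩ A0).Nonempty := by
      obtain ⟨y, hy1, hy2, -⟩ := mem_closure_iff.mp h2' W₁ hW₁open hxW₁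
      exact ⟨y, hy1, hy2⟩
    refine no_construct hHI W₁ A0 hW₁open L (by simp [hL, hlen]) ?_ H' hne
    intro y hy
    have : y ∈ DS (A0 :: L) := interior_subset hy.2
    rwa [mem_DS_iff] at this


lemma CH_aux (f : ℕ → Set X) (hfd : ∀ i j, i ≠ j → Disjoint (f i) (f j)) :
    ∀ m k, k ≠ 0 → CH (f 0) (f k) ((List.range' (k+1) m).map f) := by
  intro m
  induction m with
  | zero => intro k hk; exact hfd k 0 hk
  | succ m ih =>
      intro k hk
      rw [List.range'_succ, List.map_cons]
      exact ⟨hfd k (k+1) (by omega), ih (k+1) (by omega)⟩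

lemma Cvalid_imp_HI {n : ℕ} (hn : 1 ≤ n)
    (hval : ∀ (V : ℕ → Set X) (φ0 : Fml) (φs : List Fml), φs.length = n →
      csat V (Cfml φ0 φs) = Set.univ) : HeredIrres X (n+1) := by
  rintro S hS ⟨D, hDsub, hDdisj, hDdense⟩
  set f : ℕ → Set X := fun i => if h : i < n+1 then D ⟨i, h⟩ else ∅ with hf
  have hfd : ∀ i j, i ≠ j → Disjoint (f i) (f j) := by
    intro i j hij
    by_cases hi : i < n+1
    · by_cases hj : j < n+1
      · simp only [hf, dif_pos hi, dif_pos hj]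
        exact hDdisj ⟨i, hi⟩ ⟨j, hj⟩ (fun h => hij (congrArg Fin.val h))
      · simp only [hf, dif_neg hj]; exact disjoint_bot_right
    · simp only [hf, dif_neg hi]; exact disjoint_bot_left
  have hfS : ∀ i, i < n+1 → f i ⊆ S ∧ S ⊆ closure (f i) := by
    intro i hi
    simp only [hf, dif_pos hi]
    exact ⟨hDsub _, hDdense _⟩
  set φ0 : Fml := .var 0 with hφ0
  set φs : List Fml := (List.range' 1 n).map .var with hφs
  have hlen : φs.length = n := by simp [hφs]
  have hmapL : φs.map (csat f) = (List.range' 1 n).map f := by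
    rw [hφs, List.map_map]; rfl
  have hmapLL : (φ0 :: φs).map (csat f) = (List.range' 0 (n+1)).map f := by
    rw [List.range'_succ, List.map_cons, List.map_cons, hmapL]; rfl
  have hpair : ((List.range' 0 (n+1)).map f).Pairwise Disjoint := by
    rw [List.pairwise_map]
    exact (List.pairwise_lt_range' (s := 0) (n := n+1)).imp (fun h => hfd _ _ (Nat.ne_of_lt h))
  have h1n : (1 : ℕ) < n + 1 := by omega
  have hD1ne : (D ⟨1, h1n⟩).Nonempty := by
    obtain ⟨s0, hs0⟩ := hS
    have hcl := hDdense ⟨1, h1n⟩ hs0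
    rcases Set.eq_empty_or_nonempty (D ⟨1, h1n⟩) with he | hne
    · rw [he, closure_empty] at hcl; exact absurd hcl (Set.notMem_empty s0)
    · exact hne
  obtain ⟨x, hx1⟩ := hD1ne
  have hval' := Set.eq_univ_iff_forall.mp (hval f φ0 φs hlen) x
  have hant1 : x ∈ csat f (Fml.boxs (Dfml (φ0 :: φs))) := by
    rw [csat_boxs, csat_Dfml, hmapLL, DS_univ hpair, interior_univ]
    trivial
  have h0eq : f 0 = D ⟨0, by omega⟩ := by simp [hf]
  have hant2 : x ∈ csat f (Fml.dia φ0) := by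
    rw [csat_dia]
    show x ∈ closure (f 0)
    rw [h0eq]
    exact hDdense _ (hDsub _ hx1)
  have hcon := (mem_csat_imp f _ _ x).mp ((mem_csat_imp f _ _ x).mp hval' hant1) hant2
  rw [csat_dia] at hcon
  have hand : csat f (Fml.and φ0 (Fml.neg (Pfml φ0 φs)))
      = f 0 ∩ (PCs (f 0) ((List.range' 1 n).map f))ᶜ := by
    show csat f φ0 ∩ (csat f (Pfml φ0 φs))ᶜ = _
    rw [csat_Pfml, hmapL]
    rfl
  have hsub : f 0 ⊆ PCs (f 0) ((List.range' 1 n).map f) := by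
    refine subset_trans ((hfS 0 (by omega)).1) (subset_PCs S (f 0) (hfS 0 (by omega)).2 _ ?_)
    intro B hB
    rw [List.mem_map] at hB
    obtain ⟨i, hi, rfl⟩ := hB
    have : 1 ≤ i ∧ i < 1 + n := by simp [List.mem_range'_1] at hi; omega
    exact hfS i (by omega)
  have hempty : f 0 ∩ (PCs (f 0) ((List.range' 1 n).map f))ᶜ = ∅ := by
    apply Set.eq_empty_of_forall_notMem
    rintro z ⟨hz1, hz2⟩
    exact hz2 (hsub hz1)
  rw [hand, hempty, closure_empty] at hcon
  exact hcon

lemma dstarvalid_imp_HI {n : ℕ} (hn : 1 ≤ n)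
    (hval : ∀ (V : ℕ → Set X) (φ0 : Fml) (φs : List Fml), φs.length = n →
      dsat V (CfmlStar φ0 φs) = Set.univ) : HeredIrres X (n+1) := by
  rintro S hS ⟨D, hDsub, hDdisj, hDdense⟩
  set f : ℕ → Set X := fun i => if h : i < n+1 then D ⟨i, h⟩ else ∅ with hf
  have hfd : ∀ i j, i ≠ j → Disjoint (f i) (f j) := by
    intro i j hij
    by_cases hi : i < n+1
    · by_cases hj : j < n+1
      · simp only [hf, dif_pos hi, dif_pos hj]
        exact hDdisj ⟨i, hi⟩ ⟨j, hj⟩ (fun h => hij (congrArg Fin.val h))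
      · simp only [hf, dif_neg hj]; exact disjoint_bot_right
    · simp only [hf, dif_neg hi]; exact disjoint_bot_left
  have hfS : ∀ i, i < n+1 → f i ⊆ S ∧ S ⊆ closure (f i) := by
    intro i hi
    simp only [hf, dif_pos hi]
    exact ⟨hDsub _, hDdense _⟩
  set φ0 : Fml := .var 0 with hφ0
  set φs : List Fml := (List.range' 1 n).map .var with hφs
  have hlen : φs.length = n := by simp [hφs]
  have hmapL : φs.map (dsat f) = (List.range' 1 n).map f := by
    rw [hφs, List.map_map]; rfl
  have hmapLL : (φ0 :: φs).map (dsat f) = (List.range' 0 (n+1)).map f := by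
    rw [List.range'_succ, List.map_cons, List.map_cons, hmapL]; rfl
  have hpair : ((List.range' 0 (n+1)).map f).Pairwise Disjoint := by
    rw [List.pairwise_map]
    exact (List.pairwise_lt_range' (s := 0) (n := n+1)).imp (fun h => hfd _ _ (Nat.ne_of_lt h))
  have h1n : (1 : ℕ) < n + 1 := by omega
  have hD1ne : (D ⟨1, h1n⟩).Nonempty := by
    obtain ⟨s0, hs0⟩ := hS
    have hcl := hDdense ⟨1, h1n⟩ hs0
    rcases Set.eq_empty_or_nonempty (D ⟨1, h1n⟩) with he | hne
    · rw [he, closure_empty] at hcl; exact absurd hcl (Set.notMem_empty s0)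
    · exact hne
  obtain ⟨x, hx1⟩ := hD1ne
  have hval' := Set.eq_univ_iff_forall.mp (hval f φ0 φs hlen) x
  have hant1 : x ∈ dsat f (Fml.boxs (Dfml (φ0 :: φs))) := by
    rw [dsat_boxs, dsat_Dfml, hmapLL, DS_univ hpair, interior_univ]
    trivial
  have h0eq : f 0 = D ⟨0, by omega⟩ := by simp [hf]
  have hant2 : x ∈ dsat f (Fml.dia φ0) := by
    rw [dsat_dia]
    show x ∈ closure (f 0 \ {x})
    have hx0 : x ∉ f 0 := by
      rw [h0eq]
      exact fun hx0 =>
        Set.disjoint_left.mp (hDdisj ⟨0, by omega⟩ ⟨1, h1n⟩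
          (fun h => absurd (congrArg Fin.val h) (by simp))) hx0 hx1
    rw [Set.diff_singleton_eq_self hx0, h0eq]
    exact hDdense _ (hDsub _ hx1)
  have hcon := (mem_dsat_imp f _ _ x).mp ((mem_dsat_imp f _ _ x).mp hval' hant1) hant2
  rw [dsat_dias] at hcon
  have hand : dsat f (Fml.and φ0 (Fml.neg (Pfml φ0 φs)))
      = f 0 ∩ (PDs (f 0) ((List.range' 1 n).map f))ᶜ := by
    show dsat f φ0 ∩ (dsat f (Pfml φ0 φs))ᶜ = _
    rw [dsat_Pfml, hmapL]
    rfl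
  have hch : CH (f 0) (f 0) ((List.range' 1 n).map f) := by
    obtain ⟨m, rfl⟩ : ∃ m, n = m + 1 := ⟨n - 1, by omega⟩
    rw [List.range'_succ, List.map_cons]
    exact ⟨hfd 0 1 (by omega), CH_aux f hfd m 1 (by omega)⟩
  have hsub : f 0 ⊆ PDs (f 0) ((List.range' 1 n).map f) := by
    refine subset_PDs S (f 0) (hfS 0 (by omega)).2 _ (f 0) ((hfS 0 (by omega)).1) ?_ hch
    intro B hB
    rw [List.mem_map] at hB
    obtain ⟨i, hi, rfl⟩ := hB
    have : 1 ≤ i ∧ i < 1 + n := by simp [List.mem_range'_1] at hi; omega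
    exact hfS i (by omega)
  have hempty : f 0 ∩ (PDs (f 0) ((List.range' 1 n).map f))ᶜ = ∅ := by
    apply Set.eq_empty_of_forall_notMem
    rintro z ⟨hz1, hz2⟩
    exact hz2 (hsub hz1)
  rw [hand, hempty, closure_empty] at hcon
  exact hcon

end Aux



/-- for n ≥ 1, the following are equivalent for a space X:
X d-validates C_n; X d-validates C_n*; X C-validates C_n; X is hereditarily
(n+1)-irresolvable. -/
theorem stmt18 {X : Type} [TopologicalSpace X] (n : ℕ) (hn : 1 ≤ n) :
    ((∀ (V : ℕ → Set X) (φ0 : Fml) (φs : List Fml), φs.length = n →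
        dsat V (Cfml φ0 φs) = Set.univ) ↔
      (∀ (V : ℕ → Set X) (φ0 : Fml) (φs : List Fml), φs.length = n →
        dsat V (CfmlStar φ0 φs) = Set.univ)) ∧
    ((∀ (V : ℕ → Set X) (φ0 : Fml) (φs : List Fml), φs.length = n →
        dsat V (CfmlStar φ0 φs) = Set.univ) ↔
      (∀ (V : ℕ → Set X) (φ0 : Fml) (φs : List Fml), φs.length = n →
        csat V (Cfml φ0 φs) = Set.univ)) ∧
    ((∀ (V : ℕ → Set X) (φ0 : Fml) (φs : List Fml), φs.length = n →
        csat V (Cfml φ0 φs) = Set.univ) ↔ HeredIrres X (n+1)) := by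
  have h12 : (∀ (V : ℕ → Set X) (φ0 : Fml) (φs : List Fml), φs.length = n →
      dsat V (Cfml φ0 φs) = Set.univ) →
      (∀ (V : ℕ → Set X) (φ0 : Fml) (φs : List Fml), φs.length = n →
      dsat V (CfmlStar φ0 φs) = Set.univ) := by
    intro h V φ0 φs hlen
    apply Set.eq_univ_of_forall
    intro x
    have hx := Set.eq_univ_iff_forall.mp (h V φ0 φs hlen) x
    show x ∈ dsat V (Fml.imp _ _)
    rw [mem_dsat_imp]
    intro h1
    rw [mem_dsat_imp]
    intro h2
    have hc := (mem_dsat_imp V _ _ x).mp ((mem_dsat_imp V _ _ x).mp hx h1) h2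
    rw [dsat_dia] at hc
    rw [dsat_dias]
    exact dset_subset_closure _ hc
  have h24 := fun h => dstarvalid_imp_HI (X := X) hn h
  have h41 := fun h V φ0 φs hlen => HI_imp_dvalid (X := X) hn h V φ0 φs hlen
  have h43 := fun h V φ0 φs hlen => HI_imp_Cvalid (X := X) (n := n) h V φ0 φs hlen
  have h34 := fun h => Cvalid_imp_HI (X := X) hn h
  exact ⟨⟨h12, fun p2 => h41 (h24 p2)⟩, ⟨fun p2 => h43 (h24 p2),
    fun p3 => h12 (h41 (h34 p3))⟩, h34, h43⟩
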